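/- For a linear operator T on a vector space X and n ∈ ℕ₀, if dim(N(T^{n+2})/N(T^{n+1})) is finite, then k_n(T) = dim(N(T^{n+1})/N(T^n)) − dim(N(T^{n+2})/N(T^{n+1})), where k_n(T) = dim((R(T^n) ∩ N(T))/(R(T^{n+1}) ∩ N(T))). -/

import Mathlib

open LinearMap

/-- `T^m` induces an isomorphism `N(T^{m+1})/N(T^m) ≃ R(T^m) ⊓ N(T)`. -/
noncomputable def kerQuotEquivRangeInfKer
    {K : Type*} [Field K] {X : Type*} [AddCommGroup X] [Module K X]
    (T : Module.End K X) (m : ℕ) :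
    (↥(LinearMap.ker (T ^ (m + 1))) ⧸
        (LinearMap.ker (T ^ m)).comap (LinearMap.ker (T ^ (m + 1))).subtype) ≃ₗ[K]
      ↥(LinearMap.range (T ^ m) ⊓ LinearMap.ker T) := by
  set f : ↥(LinearMap.ker (T ^ (m + 1))) →ₗ[K]
      ↥(LinearMap.range (T ^ m) ⊓ LinearMap.ker T) :=
    LinearMap.codRestrict _ ((T ^ m).comp (LinearMap.ker (T ^ (m + 1))).subtype)
      (fun x => by
        have hx : T ((T ^ m) x.1) = 0 := by
          have hpow : (T ^ (m + 1)) = T * T ^ m := pow_succ' T m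
          calc T ((T ^ m) x.1) = (T * T ^ m) x.1 := rfl
            _ = (T ^ (m + 1)) x.1 := (LinearMap.congr_fun hpow x.1).symm
            _ = 0 := x.2
        exact ⟨⟨x.1, rfl⟩, hx⟩) with hf
  have hsurj : Function.Surjective f := by
    rintro ⟨y, ⟨x, hx⟩, hy⟩
    have hker : x ∈ LinearMap.ker (T ^ (m + 1)) := by
      rw [LinearMap.mem_ker, pow_succ']
      show T ((T ^ m) x) = 0
      rw [hx]; exact hy
    exact ⟨⟨x, hker⟩, Subtype.ext hx⟩
  have hker : LinearMap.ker f =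
      (LinearMap.ker (T ^ m)).comap (LinearMap.ker (T ^ (m + 1))).subtype := by
    ext x
    simp [hf, LinearMap.mem_ker, LinearMap.ker_codRestrict]
    exact Subtype.ext_iff
  exact (Submodule.quotEquivOfEq _ _ hker.symm).trans (f.quotKerEquivOfSurjective hsurj)

/-- If `c'_{n+1}(T) = dim (N(T^{n+2})/N(T^{n+1}))` is finite, then
`k_n(T) = c'_n(T) - c'_{n+1}(T)` (as extended natural numbers). -/
theorem kn_eq_cn'_sub
    {K : Type*} [Field K] {X : Type*} [AddCommGroup X] [Module K X]
    (T : Module.End K X) (n : ℕ)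
    (hfin : Module.rank K
      (↥(LinearMap.ker (T ^ (n + 2))) ⧸
        (LinearMap.ker (T ^ (n + 1))).comap (LinearMap.ker (T ^ (n + 2))).subtype)
      < Cardinal.aleph0) :
    Cardinal.toENat (Module.rank K
      (↥(LinearMap.range (T ^ n) ⊓ LinearMap.ker T) ⧸
        (LinearMap.range (T ^ (n + 1)) ⊓ LinearMap.ker T).comap
          (LinearMap.range (T ^ n) ⊓ LinearMap.ker T).subtype)) =
    Cardinal.toENat (Module.rank K
      (↥(LinearMap.ker (T ^ (n + 1))) ⧸
        (LinearMap.ker (T ^ n)).comap (LinearMap.ker (T ^ (n + 1))).subtype)) -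
    Cardinal.toENat (Module.rank K
      (↥(LinearMap.ker (T ^ (n + 2))) ⧸
        (LinearMap.ker (T ^ (n + 1))).comap (LinearMap.ker (T ^ (n + 2))).subtype)) := by
  set S : Submodule K X := LinearMap.range (T ^ n) ⊓ LinearMap.ker T with hS
  set S' : Submodule K X := LinearMap.range (T ^ (n + 1)) ⊓ LinearMap.ker T with hS'
  have hle : S' ≤ S := by
    apply inf_le_inf_right
    rintro _ ⟨x, rfl⟩
    exact ⟨T x, by rw [pow_succ]; rfl⟩
  -- identify c'_n with rank S and c'_{n+1} with rank S'
  have hcn : Module.rank K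
      (↥(LinearMap.ker (T ^ (n + 1))) ⧸
        (LinearMap.ker (T ^ n)).comap (LinearMap.ker (T ^ (n + 1))).subtype) =
      Module.rank K S := (kerQuotEquivRangeInfKer T n).rank_eq
  have hcn1 : Module.rank K
      (↥(LinearMap.ker (T ^ (n + 2))) ⧸
        (LinearMap.ker (T ^ (n + 1))).comap (LinearMap.ker (T ^ (n + 2))).subtype) =
      Module.rank K S' := (kerQuotEquivRangeInfKer T (n + 1)).rank_eq
  have hcomap : Module.rank K (S'.comap S.subtype) = Module.rank K S' :=
    (Submodule.comapSubtypeEquivOfLe hle).rank_eq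
  have hsum := rank_quotient_add_rank_of_divisionRing (S'.comap S.subtype)
  rw [hcomap] at hsum
  -- convert to ℕ∞
  have hsum' : Cardinal.toENat (Module.rank K (↥S ⧸ S'.comap S.subtype)) +
      Cardinal.toENat (Module.rank K S') = Cardinal.toENat (Module.rank K S) := by
    rw [← map_add, hsum]
  rw [hcn, hcn1]
  have hne : Cardinal.toENat (Module.rank K S') ≠ ⊤ := by
    rw [Ne, Cardinal.toENat_eq_top, not_le, ← hcn1]
    exact hfin
  exact (WithTop.addLECancellable_iff_ne_top.2 hne).eq_tsub_of_add_eq hsum'
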